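/- Let F : X → ℝʳ ∪ {+∞} and x̄ ∈ dom F, ε ∈ ℝʳ. If there exist λ ∈ ℝʳ₊ \ {0} and a continuous linear A : X → ℝʳ such that the scalar functional λ∘A belongs to the Fenchel ⟨λ,ε⟩-subdifferential of λ∘F at x̄, then A ∈ ∂^w_ε F(x̄). Moreover, if F is ℝʳ₊-convex, then conversely every A ∈ ∂^w_ε F(x̄) arises this way for some λ ∈ ℝʳ₊ \ {0}. -/

import Mathlib

open scoped Classical

variable {X : Type*} [AddCommGroup X] [Module ℝ X] [TopologicalSpace X] {r : ℕ}

/-- The Fenchel δ-subdifferential of a scalar extended-real-valued function. -/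
def fenchelSub (g : X → WithTop ℝ) (δ : ℝ) (xb : X) : Set (X →L[ℝ] ℝ) :=
  {p | ∀ x, g xb + ((p (x - xb) - δ : ℝ) : WithTop ℝ) ≤ g x}

/-- Weak ε-subdifferential of a vector map `F` at `xb ∈ dom F`. -/
def wSub (F : X → Fin r → WithTop ℝ) (δ : Fin r → ℝ) (xb : X) :
    Set (X →L[ℝ] (Fin r → ℝ)) :=
  {A | (∀ i, F xb i ≠ ⊤) ∧
    ¬ ∃ x, ∀ i, F x i < F xb i + (((A (x - xb)) i - δ i : ℝ) : WithTop ℝ)}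

/-- The scalarization `λ∘F : x ↦ ⟨λ, F x⟩` on `dom F`, `+∞` elsewhere. -/
noncomputable def scal (lam : Fin r → ℝ) (F : X → Fin r → WithTop ℝ) : X → WithTop ℝ :=
  fun x => if ∀ i, F x i ≠ ⊤ then ((∑ i, lam i * WithTop.untopD 0 (F x i) : ℝ) : WithTop ℝ) else ⊤

/-- The scalarized linear functional `λ∘A`. -/
noncomputable def scalL (lam : Fin r → ℝ) (A : X →L[ℝ] (Fin r → ℝ)) : X →L[ℝ] ℝ :=
  (∑ i : Fin r, lam i • ContinuousLinearMap.proj i).comp A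

/-- `F` is `ℝʳ₊`-convex (with the conventions `α·(+∞) = +∞` for `α > 0`, `0·(+∞) = 0`). -/
def RPlusConvex (F : X → Fin r → WithTop ℝ) : Prop :=
  ∀ a b : ℝ, 0 ≤ a → 0 ≤ b → a + b = 1 → ∀ x x' : X, ∀ i,
    F (a • x + b • x') i ≤ (a : WithTop ℝ) * F x i + (b : WithTop ℝ) * F x' i

lemma coe_untop'_eq (a : WithTop ℝ) (h : a ≠ ⊤) : a = ((WithTop.untopD 0 a : ℝ) : WithTop ℝ) := by
  lift a to ℝ using h
  simp

lemma scalL_apply' (lam : Fin r → ℝ) (A : X →L[ℝ] (Fin r → ℝ)) (y : X) :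
    scalL lam A y = ∑ i, lam i * A y i := by
  simp [scalL, ContinuousLinearMap.sum_apply]

lemma scal_of_fin (lam : Fin r → ℝ) (F : X → Fin r → WithTop ℝ) (x : X)
    (h : ∀ i, F x i ≠ ⊤) :
    scal lam F x = ((∑ i, lam i * WithTop.untopD 0 (F x i) : ℝ) : WithTop ℝ) := by
  unfold scal
  rw [if_pos h]

/-- scalarization of the weak ε-subdifferential.  If `λ∘A` belongs to the
Fenchel `⟨λ,ε⟩`-subdifferential of `λ∘F` at `xb` for some `λ ∈ ℝʳ₊ \ {0}`, then
`A ∈ ∂^w_ε F(xb)`; and conversely when `F` is `ℝʳ₊`-convex. -/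
theorem weak_subdiff_scalarization
    (F : X → Fin r → WithTop ℝ) (xb : X) (hxb : ∀ i, F xb i ≠ ⊤) (ε : Fin r → ℝ) :
    (∀ A : X →L[ℝ] (Fin r → ℝ),
      (∃ lam : Fin r → ℝ, (0 ≤ lam ∧ lam ≠ 0) ∧
        scalL lam A ∈ fenchelSub (scal lam F) (∑ i, lam i * ε i) xb) →
      A ∈ wSub F ε xb) ∧
    (RPlusConvex F →
      ∀ A : X →L[ℝ] (Fin r → ℝ), A ∈ wSub F ε xb →
        ∃ lam : Fin r → ℝ, (0 ≤ lam ∧ lam ≠ 0) ∧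
          scalL lam A ∈ fenchelSub (scal lam F) (∑ i, lam i * ε i) xb) := by
  constructor
  · rintro A ⟨lam, ⟨hlam0, hlamne⟩, hsub⟩
    refine ⟨hxb, ?_⟩
    rintro ⟨x, hx⟩
    have hlam0' : ∀ i, 0 ≤ lam i := fun i => hlam0 i
    have hxfin : ∀ i, F x i ≠ ⊤ := by
      intro i
      have h := hx i
      rw [coe_untop'_eq _ (hxb i), ← WithTop.coe_add] at h
      exact ne_top_of_lt h
    have hreal : ∀ i, WithTop.untopD 0 (F x i) <
        WithTop.untopD 0 (F xb i) + (A (x - xb) i - ε i) := by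
      intro i
      have h := hx i
      rw [coe_untop'_eq (F x i) (hxfin i), coe_untop'_eq (F xb i) (hxb i),
        ← WithTop.coe_add, WithTop.coe_lt_coe] at h
      exact h
    obtain ⟨i₀, hi₀⟩ := Function.ne_iff.mp hlamne
    have hi₀pos : 0 < lam i₀ := lt_of_le_of_ne (hlam0' i₀) (Ne.symm hi₀)
    have hsum : ∑ i, lam i * WithTop.untopD 0 (F x i) <
        ∑ i, lam i * (WithTop.untopD 0 (F xb i) + (A (x - xb) i - ε i)) :=
      Finset.sum_lt_sum (fun i _ => mul_le_mul_of_nonneg_left (hreal i).le (hlam0' i))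
        ⟨i₀, Finset.mem_univ _, mul_lt_mul_of_pos_left (hreal i₀) hi₀pos⟩
    have h2 := hsub x
    rw [scal_of_fin lam F xb hxb, scal_of_fin lam F x hxfin, ← WithTop.coe_add,
      WithTop.coe_le_coe, scalL_apply'] at h2
    have expand : ∑ i, lam i * (WithTop.untopD 0 (F xb i) + (A (x - xb) i - ε i)) =
        ∑ i, lam i * WithTop.untopD 0 (F xb i) +
          (∑ i, lam i * A (x - xb) i - ∑ i, lam i * ε i) := by
      rw [← Finset.sum_sub_distrib, ← Finset.sum_add_distrib]
      congr 1; ext i; ring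
    rw [expand] at hsum
    linarith
  · intro hconv A hA
    obtain ⟨-, hno⟩ := hA
    -- the convex set to separate from the open negative orthant
    set S : Set (Fin r → ℝ) := {z | ∃ x, (∀ i, F x i ≠ ⊤) ∧
        ∀ i, WithTop.untopD 0 (F x i) - WithTop.untopD 0 (F xb i) - A (x - xb) i + ε i ≤ z i} with hSdef
    set s : Set (Fin r → ℝ) := {w | ∀ i, w i < 0} with hsdef
    have hspi : s = Set.pi Set.univ (fun _ => Set.Iio (0:ℝ)) := by
      ext w; simp [hsdef, Set.mem_pi]
    have hsopen : IsOpen s := by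
      rw [hspi]; exact isOpen_set_pi Set.finite_univ (fun i _ => isOpen_Iio)
    have hsconv : Convex ℝ s := by
      rw [hspi]; exact convex_pi (fun i _ => convex_Iio 0)
    have hSconv : Convex ℝ S := by
      rintro z ⟨x, hxf, hz⟩ z' ⟨x', hxf', hz'⟩ a b ha hb hab
      have hle : ∀ i, F (a • x + b • x') i ≤
          ((a * WithTop.untopD 0 (F x i) + b * WithTop.untopD 0 (F x' i) : ℝ) : WithTop ℝ) := by
        intro i
        have h := hconv a b ha hb hab x x' i
        rw [coe_untop'_eq (F x i) (hxf i), coe_untop'_eq (F x' i) (hxf' i),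
          ← WithTop.coe_mul, ← WithTop.coe_mul, ← WithTop.coe_add] at h
        exact h
      have hfin : ∀ i, F (a • x + b • x') i ≠ ⊤ :=
        fun i => ne_top_of_le_ne_top WithTop.coe_ne_top (hle i)
      have hrle : ∀ i, WithTop.untopD 0 (F (a • x + b • x') i) ≤
          a * WithTop.untopD 0 (F x i) + b * WithTop.untopD 0 (F x' i) := by
        intro i
        have h := hle i
        rw [coe_untop'_eq (F (a • x + b • x') i) (hfin i), WithTop.coe_le_coe] at h
        exact h
      have hxbsum : a • xb + b • xb = xb := by rw [← add_smul, hab, one_smul]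
      have hkey : a • x + b • x' - xb = a • (x - xb) + b • (x' - xb) := by
        rw [smul_sub, smul_sub]
        rw [show a • x - a • xb + (b • x' - b • xb) = a • x + b • x' - (a • xb + b • xb) by
          abel, hxbsum]
      have hAkey : ∀ i, A (a • x + b • x' - xb) i =
          a * A (x - xb) i + b * A (x' - xb) i := by
        intro i
        rw [hkey, map_add, map_smul, map_smul]
        simp
      refine ⟨a • x + b • x', hfin, ?_⟩
      intro i
      have h1 := mul_le_mul_of_nonneg_left (hz i) ha
      have h2 := mul_le_mul_of_nonneg_left (hz' i) hb
      have e1 : a * WithTop.untopD 0 (F xb i) + b * WithTop.untopD 0 (F xb i) = WithTop.untopD 0 (F xb i) := by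
        rw [← add_mul, hab, one_mul]
      have e2 : a * ε i + b * ε i = ε i := by rw [← add_mul, hab, one_mul]
      have hg : (a • z + b • z') i = a * z i + b * z' i := by
        simp [smul_eq_mul]
      rw [hg, hAkey i]
      nlinarith [hrle i]
    have hdisj : Disjoint s S := by
      rw [Set.disjoint_left]
      rintro w hw ⟨x, hxf, hxle⟩
      refine hno ⟨x, fun i => ?_⟩
      have h1 := lt_of_le_of_lt (hxle i) (hw i)
      rw [coe_untop'_eq (F x i) (hxf i), coe_untop'_eq (F xb i) (hxb i),
        ← WithTop.coe_add, WithTop.coe_lt_coe]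
      linarith
    have hSne : ε ∈ S := by
      refine ⟨xb, hxb, fun i => ?_⟩
      simp
    have hsne : (fun _ => (-1 : ℝ)) ∈ s := fun i => by norm_num
    obtain ⟨f, u, hfu, huf⟩ := geometric_hahn_banach_open hsconv hsopen hSconv hdisj
    set lam : Fin r → ℝ := fun i => f (Pi.single i 1) with hlamdef
    have hf : ∀ z : Fin r → ℝ, f z = ∑ i, z i * lam i := by
      intro z
      have hz : ∑ i, z i • (Pi.single i (1:ℝ) : Fin r → ℝ) = z := by
        simp only [← Pi.single_smul, smul_eq_mul, mul_one, Finset.univ_sum_single]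
      calc f z = f (∑ i, z i • (Pi.single i (1:ℝ) : Fin r → ℝ)) := by rw [hz]
        _ = ∑ i, z i * lam i := by rw [map_sum]; simp [hlamdef]
    have hcu : f (fun _ => (-1:ℝ)) < u := hfu _ hsne
    have hlamnn : ∀ i, 0 ≤ lam i := by
      intro i
      by_contra hneg
      push_neg at hneg
      set c : ℝ := f (fun _ => (-1:ℝ)) with hc
      set t : ℝ := (u - c) / (-lam i) + 1 with ht
      have hmu : 0 < -lam i := by linarith
      have ht0 : 0 < t := by
        rw [ht]
        have h3 : 0 < (u - c) / (-lam i) := div_pos (by linarith) hmu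
        linarith
      have hwmem : ((fun _ => (-1:ℝ)) - t • (Pi.single i (1:ℝ) : Fin r → ℝ)) ∈ s := by
        intro j
        by_cases hji : j = i
        · subst hji
          simp only [Pi.sub_apply, Pi.smul_apply, Pi.single_eq_same, smul_eq_mul, mul_one]
          linarith
        · simp only [Pi.sub_apply, Pi.smul_apply, Pi.single_eq_of_ne hji, smul_eq_mul,
            mul_zero, sub_zero]
          norm_num
      have hfw : f ((fun _ => (-1:ℝ)) - t • (Pi.single i (1:ℝ) : Fin r → ℝ)) =
          c - t * lam i := by
        rw [map_sub, map_smul, smul_eq_mul, hc]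
      have hlt := hfu _ hwmem
      rw [hfw] at hlt
      have htmu : t * (-lam i) = (u - c) + (-lam i) := by
        rw [ht, add_mul, div_mul_cancel₀ _ (ne_of_gt hmu), one_mul]
      nlinarith
    have hlamne : lam ≠ 0 := by
      intro h0
      have h1 : f (fun _ => (-1:ℝ)) = 0 := by rw [hf]; simp [h0]
      have h2 : f ε = 0 := by rw [hf]; simp [h0]
      have := huf ε hSne
      rw [h2] at this
      rw [h1] at hcu
      linarith
    have hu0 : 0 ≤ u := by
      by_contra hu
      push_neg at hu
      set c' : ℝ := ∑ i, lam i with hc'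
      have hc'nn : 0 ≤ c' := Finset.sum_nonneg (fun i _ => hlamnn i)
      set δ : ℝ := -u / (c' + 1) with hδ
      have hδ0 : 0 < δ := div_pos (by linarith) (by linarith)
      have hwmem : (fun _ => -δ) ∈ s := fun j => by simpa using neg_lt_zero.mpr hδ0
      have hfw : f (fun _ => -δ) = -δ * c' := by
        rw [hf]
        rw [hc', Finset.mul_sum]
      have hlt := hfu _ hwmem
      rw [hfw] at hlt
      have hδc : δ * (c' + 1) = -u := by
        rw [hδ, div_mul_cancel₀ _ (by linarith : c' + 1 ≠ 0)]
      nlinarith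
    refine ⟨lam, ⟨fun i => hlamnn i, hlamne⟩, ?_⟩
    intro x
    by_cases hxf : ∀ i, F x i ≠ ⊤
    · have hzS : (fun i => WithTop.untopD 0 (F x i) - WithTop.untopD 0 (F xb i) - A (x - xb) i + ε i) ∈ S :=
        ⟨x, hxf, fun i => le_refl _⟩
      have hge := le_trans hu0 (huf _ hzS)
      rw [hf] at hge
      have expand : ∑ i, (WithTop.untopD 0 (F x i) - WithTop.untopD 0 (F xb i) - A (x - xb) i + ε i) * lam i =
          ∑ i, lam i * WithTop.untopD 0 (F x i) - ∑ i, lam i * WithTop.untopD 0 (F xb i) -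
            ∑ i, lam i * A (x - xb) i + ∑ i, lam i * ε i := by
        rw [← Finset.sum_sub_distrib, ← Finset.sum_sub_distrib, ← Finset.sum_add_distrib]
        congr 1; ext i; ring
      rw [expand] at hge
      rw [scal_of_fin lam F xb hxb, scal_of_fin lam F x hxf, ← WithTop.coe_add,
        WithTop.coe_le_coe, scalL_apply']
      linarith
    · have htop : scal lam F x = ⊤ := by
        unfold scal
        rw [if_neg hxf]
      rw [htop]
      exact le_top
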